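/- Let K be a differential field of characteristic zero whose field of constants is C (the kernel of the derivation D). Let F, G, H ∈ K be nonzero and suppose Φ(F,G,H) = 0 and Φ(1/F, 1/G, 1/H) = 0, where Φ(F₁,F₂,F₃) := F₁F₂F₃·det[[1,1,1],[1/F₁,1/F₂,1/F₃],[D(1/F₁),D(1/F₂),D(1/F₃)]]. Then either two of F, G, H are equal, or all three ratios F/G, G/H, H/F are constants (lie in C). -/
import Mathlib


/-- Fujimoto's proposition: if Cartan's auxiliary function vanishes for `(F,G,H)`
and for `(1/F,1/G,1/H)`, then either two of the functions coincide, or all three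
ratios `F/G`, `G/H`, `H/F` are constants (lie in the kernel of the derivation). -/
theorem stmt_6 (K : Type*) [Field K] [CharZero K] (D : K → K)
    (hadd : ∀ x y, D (x + y) = D x + D y)
    (hmul : ∀ x y, D (x * y) = x * D y + D x * y)
    (F G H : K) (hF : F ≠ 0) (hG : G ≠ 0) (hH : H ≠ 0)
    (hΦ : F * G * H *
      (Matrix.det !![1, 1, 1; F⁻¹, G⁻¹, H⁻¹; D F⁻¹, D G⁻¹, D H⁻¹]) = 0)
    (hΦinv : F⁻¹ * G⁻¹ * H⁻¹ *
      (Matrix.det !![1, 1, 1; F, G, H; D F, D G, D H]) = 0) :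
    (F = G ∨ G = H ∨ H = F) ∨
      (D (F / G) = 0 ∧ D (G / H) = 0 ∧ D (H / F) = 0) := by
  have iF : F * F⁻¹ = 1 := mul_inv_cancel₀ hF
  have iG : G * G⁻¹ = 1 := mul_inv_cancel₀ hG
  have iH : H * H⁻¹ = 1 := mul_inv_cancel₀ hH
  -- D 1 = 0
  have hone : D 1 = 0 := by
    have h := hmul 1 1
    simp at h
    exact h
  -- derivative of the inverse
  have hinv : ∀ x : K, x ≠ 0 → D x⁻¹ = -(D x) * (x⁻¹ * x⁻¹) := by
    intro x hx
    have h : x * D x⁻¹ + D x * x⁻¹ = 0 := by rw [← hmul, mul_inv_cancel₀ hx, hone]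
    apply mul_left_cancel₀ hx
    rw [show x * (-(D x) * (x⁻¹ * x⁻¹)) = -(D x) * (x * x⁻¹ * x⁻¹) by ring,
      mul_inv_cancel₀ hx, one_mul]
    linear_combination h
  -- extract the vanishing determinants
  have h2 : Matrix.det !![1, 1, 1; F, G, H; D F, D G, D H] = 0 := by
    simpa [mul_eq_zero, inv_eq_zero, hF, hG, hH] using hΦinv
  have h1 : Matrix.det !![1, 1, 1; F⁻¹, G⁻¹, H⁻¹; D F⁻¹, D G⁻¹, D H⁻¹] = 0 := by
    simpa [mul_eq_zero, hF, hG, hH] using hΦ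
  simp [Matrix.det_fin_three] at h1 h2
  rw [hinv F hF, hinv G hG, hinv H hH] at h1
  -- the two linear relations among D F, D G, D H
  have eqA : (H - G) * D F + (F - H) * D G + (G - F) * D H = 0 := by
    linear_combination h2
  have eqB : G * H * (H - G) * D F + F * H * (F - H) * D G + F * G * (G - F) * D H = 0 := by
    linear_combination (F ^ 2 * G ^ 2 * H ^ 2) * h1
      + ((1 + F * F⁻¹) * G ^ 2 * H * D F - (1 + F * F⁻¹) * G * H ^ 2 * D F
          - (H * H⁻¹) ^ 2 * F * G ^ 2 * D H + (G * G⁻¹) ^ 2 * F * H ^ 2 * D G) * iF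
      + ((H * H⁻¹) ^ 2 * F ^ 2 * G * D H - (1 + G * G⁻¹) * F ^ 2 * H * D G
          + (1 + G * G⁻¹) * F * H ^ 2 * D G - (F * F⁻¹) ^ 2 * G * H ^ 2 * D F) * iG
      + ((1 + H * H⁻¹) * F ^ 2 * G * D H - (G * G⁻¹) ^ 2 * F ^ 2 * H * D G
          - (1 + H * H⁻¹) * F * G ^ 2 * D H + (F * F⁻¹) ^ 2 * G ^ 2 * H * D F) * iH
  by_cases hFG : F = G
  · exact Or.inl (Or.inl hFG)
  by_cases hGH : G = H
  · exact Or.inl (Or.inr (Or.inl hGH))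
  by_cases hHF : H = F
  · exact Or.inl (Or.inr (Or.inr hHF))
  right
  have hFG' : F - G ≠ 0 := sub_ne_zero.mpr hFG
  have hGH' : G - H ≠ 0 := sub_ne_zero.mpr hGH
  have hHF' : H - F ≠ 0 := sub_ne_zero.mpr hHF
  -- the three logarithmic-derivative identities
  have k1 : F * D G - G * D F = 0 := by
    have h : (F - H) * ((G - H) * (F * D G - G * D F)) = 0 := by
      linear_combination F * G * eqA - eqB
    rcases mul_eq_zero.mp h with h' | h'
    · exact absurd h' (sub_ne_zero.mpr fun e => hHF e.symm)
    rcases mul_eq_zero.mp h' with h'' | h''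
    · exact absurd h'' hGH'
    · exact h''
  have k2 : G * D H - H * D G = 0 := by
    have h : (G - F) * ((H - F) * (G * D H - H * D G)) = 0 := by
      linear_combination G * H * eqA - eqB
    rcases mul_eq_zero.mp h with h' | h'
    · exact absurd h' (sub_ne_zero.mpr fun e => hFG e.symm)
    rcases mul_eq_zero.mp h' with h'' | h''
    · exact absurd h'' hHF'
    · exact h''
  have k3 : H * D F - F * D H = 0 := by
    have h : (H - G) * ((F - G) * (H * D F - F * D H)) = 0 := by
      linear_combination F * H * eqA - eqB
    rcases mul_eq_zero.mp h with h' | h'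
    · exact absurd h' (sub_ne_zero.mpr fun e => hGH e.symm)
    rcases mul_eq_zero.mp h' with h'' | h''
    · exact absurd h'' hFG'
    · exact h''
  refine ⟨?_, ?_, ?_⟩
  · rw [div_eq_mul_inv, hmul, hinv G hG]
    linear_combination (-(G⁻¹ * G⁻¹)) * k1 - D F * G⁻¹ * iG
  · rw [div_eq_mul_inv, hmul, hinv H hH]
    linear_combination (-(H⁻¹ * H⁻¹)) * k2 - D G * H⁻¹ * iH
  · rw [div_eq_mul_inv, hmul, hinv F hF]
    linear_combination (-(F⁻¹ * F⁻¹)) * k3 - D H * F⁻¹ * iF
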